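/- Case (V), classification: Every irreducible case-V representation (V, ρ, X, Y) is isomorphic to L(η) for some character η of Γ with η|_Λ = ξ, where an isomorphism of representations is a linear isomorphism intertwining X, Y and every ρ(h). -/

import Mathlib

noncomputable section

/-- `(V, ρ, X, Y)` is a representation of the common part of the rank-2 algebra `A(ξ)`:
`ρ` is a group homomorphism (recorded via multiplicativity and unitality),
`ρ(h)∘X = χ₁(h)·(X∘ρ(h))` and `ρ(h)∘Y = χ₂(h)·(Y∘ρ(h))` for all `h ∈ Γ`, and
`ρ(g) = ξ(g)·id` for all `g ∈ Λ`. -/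
def IsRep {Γ : Type*} [CommGroup Γ] (χ₁ χ₂ : Γ →* ℂˣ) (Λ : Subgroup Γ) (ξ : ↥Λ →* ℂˣ)
    {V : Type*} [AddCommGroup V] [Module ℂ V]
    (ρ : Γ → Module.End ℂ V) (X Y : Module.End ℂ V) : Prop :=
  (∀ a b : Γ, ρ (a * b) = ρ a * ρ b) ∧ ρ 1 = 1 ∧
  (∀ h : Γ, ρ h * X = (χ₁ h : ℂ) • (X * ρ h)) ∧
  (∀ h : Γ, ρ h * Y = (χ₂ h : ℂ) • (Y * ρ h)) ∧
  ∀ g : Λ, ρ (g : Γ) = (ξ g : ℂ) • (1 : Module.End ℂ V)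

/-- A subspace `W` is stable under `X`, `Y` and all `ρ(h)`. -/
def Stable2 {Γ : Type*} {V : Type*} [AddCommGroup V] [Module ℂ V]
    (ρ : Γ → Module.End ℂ V) (X Y : Module.End ℂ V) (W : Submodule ℂ V) : Prop :=
  (∀ v ∈ W, X v ∈ W) ∧ (∀ v ∈ W, Y v ∈ W) ∧ ∀ h : Γ, ∀ v ∈ W, ρ h v ∈ W

/-- Irreducibility: `V ≠ 0` and the only subspaces stable under `X`, `Y` and all `ρ(h)`
are `0` and `V`. -/
def Irred2 {Γ : Type*} {V : Type*} [AddCommGroup V] [Module ℂ V]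
    (ρ : Γ → Module.End ℂ V) (X Y : Module.End ℂ V) : Prop :=
  (∃ v : V, v ≠ 0) ∧ ∀ W : Submodule ℂ V, Stable2 ρ X Y W → W = ⊥ ∨ W = ⊤

/-- The sequence `c_i` defined by `c₀ = c` and
`c_i = q·(c_{i−1} + ν − ν·q^{2(i−1)}·γ)` for `i ≥ 1`. -/
def cseq (q ν γ c : ℂ) : ℕ → ℂ
  | 0 => c
  | i + 1 => q * (cseq q ν γ c i + ν - ν * q ^ (2 * i) * γ)

/-- `(V, ρ, X, Y)` is a case-V representation: a representation with in addition
`X^r = id`, `Y^r = 0` and `X∘Y = q⁻¹·(Y∘X) + ρ(g₁g₂) − id`, where `q = χ₁(g₁)`. -/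
def IsRepV {Γ : Type*} [CommGroup Γ] (g₁ g₂ : Γ) (χ₁ χ₂ : Γ →* ℂˣ)
    (Λ : Subgroup Γ) (ξ : ↥Λ →* ℂˣ) (r : ℕ)
    {V : Type*} [AddCommGroup V] [Module ℂ V]
    (ρ : Γ → Module.End ℂ V) (X Y : Module.End ℂ V) : Prop :=
  IsRep χ₁ χ₂ Λ ξ ρ X Y ∧ X ^ r = 1 ∧ Y ^ r = 0 ∧
    X * Y = (((χ₁ g₁ : ℂˣ) : ℂ))⁻¹ • (Y * X) + ρ (g₁ * g₂) - 1

/-- The action of `h ∈ Γ` on `L(η)`, with `ρ(h)·f_i = η(h)·χ₁(h)^i·f_i` on the basis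
`(f_i)_{i ∈ ℤ/rℤ}` of `ℤ/rℤ → ℂ`. -/
def wRho (r : ℕ) {Γ : Type*} [CommGroup Γ] (χ₁ η : Γ →* ℂˣ) (h : Γ) :
    Module.End ℂ (ZMod r → ℂ) where
  toFun v := fun i => (η h : ℂ) * (χ₁ h : ℂ) ^ i.val * v i
  map_add' v w := by funext i; simp [mul_add]
  map_smul' a v := by funext i; simp [smul_eq_mul]; ring

/-- The operator `X` on `L(η)`, with `X·f_i = f_{i+1}` (indices modulo `r`). -/
def wX (r : ℕ) : Module.End ℂ (ZMod r → ℂ) where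
  toFun v := fun i => v (i - 1)
  map_add' _ _ := rfl
  map_smul' _ _ := rfl

/-- The operator `Y` on `L(η)`, with `Y·f_i = c_i·f_{i−1}` (indices modulo `r`,
the index of `c` being read off via the canonical representative in `{0, …, r−1}`). -/
def wY (r : ℕ) (cs : ℕ → ℂ) : Module.End ℂ (ZMod r → ℂ) where
  toFun v := fun j => cs ((j + 1 : ZMod r).val) * v (j + 1)
  map_add' v w := by funext j; simp [mul_add]
  map_smul' a v := by funext j; simp [smul_eq_mul]; ring


lemma exists_common_scalar {Γ : Type*} [Fintype Γ] {V : Type*} [AddCommGroup V] [Module ℂ V]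
    [FiniteDimensional ℂ V] (fam : Γ → Module.End ℂ V)
    (hcomm : ∀ a b, fam a * fam b = fam b * fam a)
    (W : Submodule ℂ V) (hW : W ≠ ⊥) (hinv : ∀ h : Γ, ∀ v ∈ W, fam h v ∈ W) :
    ∃ v : V, v ∈ W ∧ v ≠ 0 ∧ ∀ h : Γ, ∃ c : ℂ, fam h v = c • v := by
  suffices H : ∀ s : Finset Γ, ∃ W' : Submodule ℂ V, W' ≤ W ∧ W' ≠ ⊥ ∧
      (∀ h : Γ, ∀ v ∈ W', fam h v ∈ W') ∧
      ∀ h ∈ s, ∃ c : ℂ, ∀ v ∈ W', fam h v = c • v by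
    obtain ⟨W', hle, hW', _, hsc⟩ := H Finset.univ
    obtain ⟨v, hvW, hv0⟩ := Submodule.exists_mem_ne_zero_of_ne_bot hW'
    exact ⟨v, hle hvW, hv0, fun h => (hsc h (Finset.mem_univ h)).imp fun c hc => hc v hvW⟩
  classical
  intro s
  induction s using Finset.induction_on with
  | empty => exact ⟨W, le_rfl, hW, hinv, by simp⟩
  | @insert a s ha ih =>
    obtain ⟨W', hle, hW', hinv', hsc⟩ := ih
    haveI : Nontrivial W' := Submodule.nontrivial_iff_ne_bot.mpr hW'
    obtain ⟨c, hc⟩ :=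
      Module.End.exists_eigenvalue (LinearMap.restrict (fam a) (p := W') (q := W') (hinv' a))
    obtain ⟨⟨v, hvW⟩, hv⟩ := hc.exists_hasEigenvector
    rw [Module.End.hasEigenvector_iff, Module.End.mem_eigenspace_iff] at hv
    have hva : fam a v = c • v := by
      have := congrArg Subtype.val hv.1
      simpa [LinearMap.restrict_apply] using this
    have hv0 : v ≠ 0 := fun h => hv.2 (Subtype.ext h)
    refine ⟨W' ⊓ Module.End.eigenspace (fam a) c, le_trans inf_le_left hle, ?_, ?_, ?_⟩
    · intro hbot
      have hvmem : v ∈ W' ⊓ Module.End.eigenspace (fam a) c :=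
        Submodule.mem_inf.mpr ⟨hvW, Module.End.mem_eigenspace_iff.mpr hva⟩
      rw [hbot] at hvmem
      exact hv0 hvmem
    · rintro h u hu
      obtain ⟨huW, hue⟩ := Submodule.mem_inf.mp hu
      refine Submodule.mem_inf.mpr ⟨hinv' h u huW, Module.End.mem_eigenspace_iff.mpr ?_⟩
      have hco : fam a (fam h u) = fam h (fam a u) := by
        have := congrFun (congrArg DFunLike.coe (hcomm a h)) u
        simpa [Module.End.mul_apply] using this
      rw [hco, Module.End.mem_eigenspace_iff.mp hue, map_smul]
    · intro h hh
      rcases Finset.mem_insert.mp hh with rfl | hs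
      · exact ⟨c, fun u hu => Module.End.mem_eigenspace_iff.mp (Submodule.mem_inf.mp hu).2⟩
      · obtain ⟨c', hc'⟩ := hsc h hs
        exact ⟨c', fun u hu => hc' u (Submodule.mem_inf.mp hu).1⟩

/-- Case (V), classification: every irreducible case-V representation `(V, ρ, X, Y)` is
isomorphic, via a linear isomorphism intertwining `X`, `Y` and every `ρ(h)`, to `L(η)`
for some character `η` of `Γ` with `η|_Λ = ξ`. -/
theorem caseV_classification {Γ : Type*} [CommGroup Γ] [Fintype Γ] (g₁ g₂ : Γ)
    (χ₁ χ₂ : Γ →* ℂˣ) (hχ₂ : χ₂ = χ₁⁻¹) (h12 : χ₁ g₂ * χ₂ g₁ = 1)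
    (r : ℕ) (hr : 1 < r) (hord : orderOf χ₁ = r)
    (hq : IsPrimitiveRoot ((χ₁ g₁ : ℂˣ) : ℂ) r)
    (Λ : Subgroup Γ) (hΛ : ∀ g : Γ, g ∈ Λ ↔ (χ₁ g = 1 ∧ χ₂ g = 1)) (ξ : ↥Λ →* ℂˣ)
    (V : Type*) [AddCommGroup V] [Module ℂ V] [FiniteDimensional ℂ V]
    (ρ : Γ → Module.End ℂ V) (X Y : Module.End ℂ V)
    (hrep : IsRepV g₁ g₂ χ₁ χ₂ Λ ξ r ρ X Y) (hirr : Irred2 ρ X Y) :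
    ∃ η : Γ →* ℂˣ, (∀ g : Λ, η (g : Γ) = ξ g) ∧
      ∃ φ : V ≃ₗ[ℂ] (ZMod r → ℂ),
        (∀ v : V, φ (X v) = wX r (φ v)) ∧
        (∀ v : V, φ (Y v) =
          wY r (cseq ((χ₁ g₁ : ℂˣ) : ℂ) 1 ((η (g₁ * g₂) : ℂˣ) : ℂ) 0) (φ v)) ∧
        ∀ (h : Γ) (v : V), φ (ρ h v) = wRho r χ₁ η h (φ v) := by
  classical
  obtain ⟨⟨hmul, hone, hXc, hYc, hΛact⟩, hXr, hYr, hXY⟩ := hrep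
  haveI : NeZero r := ⟨by omega⟩
  haveI : Fact (1 < r) := ⟨hr⟩
  set q : ℂ := ((χ₁ g₁ : ℂˣ) : ℂ) with hqdef
  have hq0 : q ≠ 0 := Units.ne_zero _
  have hg2u : χ₁ g₂ = χ₁ g₁ := by
    rw [hχ₂] at h12
    have h' : χ₁ g₂ * (χ₁ g₁)⁻¹ = 1 := by simpa using h12
    exact mul_inv_eq_one.mp h'
  -- kernel of Y is nonzero
  have hkerY : LinearMap.ker Y ≠ ⊥ := by
    intro hbot
    obtain ⟨v, hv⟩ := hirr.1
    have hinj : Function.Injective Y := by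
      rw [← LinearMap.ker_eq_bot]; exact hbot
    have h2 : Y^[r] v = Y^[r] 0 := by
      rw [← Module.End.pow_apply, ← Module.End.pow_apply, hYr]; simp
    exact hv (hinj.iterate r h2)
  -- kernel of Y is invariant under all ρ h
  have hkinv : ∀ h : Γ, ∀ v ∈ LinearMap.ker Y, ρ h v ∈ LinearMap.ker Y := by
    intro h v hv
    rw [LinearMap.mem_ker] at hv ⊢
    have hop := congrFun (congrArg DFunLike.coe (hYc h)) v
    simp only [Module.End.mul_apply, LinearMap.smul_apply] at hop
    rw [hv, map_zero] at hop
    exact (smul_eq_zero.mp hop.symm).resolve_left (Units.ne_zero _)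
  have hcomm : ∀ a b : Γ, ρ a * ρ b = ρ b * ρ a := fun a b => by
    rw [← hmul, ← hmul, mul_comm]
  obtain ⟨w, hwker, hw0, hsc⟩ := exists_common_scalar ρ hcomm _ hkerY hkinv
  have hYw : Y w = 0 := LinearMap.mem_ker.mp hwker
  -- the character η as scalars
  set cf : Γ → ℂ := fun h => (hsc h).choose with hcfdef
  have hcfa : ∀ h : Γ, ρ h w = cf h • w := fun h => (hsc h).choose_spec
  have huniq : ∀ {a b : ℂ}, a • w = b • w → a = b := by
    intro a b hab
    have h0 : (a - b) • w = 0 := by rw [sub_smul, hab, sub_self]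
    have := (smul_eq_zero.mp h0).resolve_right hw0
    exact sub_eq_zero.mp this
  have hcf1 : cf 1 = 1 := by
    apply huniq
    rw [← hcfa, hone, one_smul]; rfl
  have hcfmul : ∀ a b : Γ, cf (a * b) = cf a * cf b := by
    intro a b
    apply huniq
    rw [← hcfa, hmul]
    show ρ a (ρ b w) = _
    rw [hcfa b, map_smul, hcfa a, smul_smul, mul_comm]
  have hcfne : ∀ a : Γ, cf a ≠ 0 := by
    intro a
    have : cf a * cf a⁻¹ = 1 := by rw [← hcfmul, mul_inv_cancel, hcf1]
    exact left_ne_zero_of_mul_eq_one this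
  set η : Γ →* ℂˣ :=
    { toFun := fun h => Units.mk0 (cf h) (hcfne h)
      map_one' := Units.ext (by simpa using hcf1)
      map_mul' := fun a b => Units.ext (by simpa using hcfmul a b) } with hηdef
  have hηval : ∀ h : Γ, ((η h : ℂˣ) : ℂ) = cf h := fun h => rfl
  refine ⟨η, ?_, ?_⟩
  · intro g
    apply Units.ext
    have h1 : ρ (g : Γ) w = ((ξ g : ℂˣ) : ℂ) • w := by
      rw [hΛact g]; rfl
    rw [hηval]
    exact huniq (by rw [← hcfa, h1])
  -- the vectors f i = X^i w
  set f : ℕ → V := fun i => (X ^ i) w with hfdef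
  have hf0 : f 0 = w := by simp [hfdef]
  have hfX : ∀ i, X (f i) = f (i + 1) := by
    intro i
    show X ((X ^ i) w) = (X ^ (i + 1)) w
    rw [pow_succ', Module.End.mul_apply]
  have hfr : f r = f 0 := by
    show (X ^ r) w = (X ^ 0) w
    rw [hXr, pow_zero]
  have hρf : ∀ (h : Γ) (i : ℕ), ρ h (f i) = (cf h * ((χ₁ h : ℂˣ) : ℂ) ^ i) • f i := by
    intro h i
    induction i with
    | zero => simpa [hf0] using hcfa h
    | succ i ih =>
      have hop := congrFun (congrArg DFunLike.coe (hXc h)) (f i)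
      simp only [Module.End.mul_apply, LinearMap.smul_apply] at hop
      rw [ih, map_smul, hfX] at hop
      rw [hop, smul_smul]
      match_scalars
      ring
  -- the operator identity for Y X
  have hYX : Y * X = q • (X * Y) - q • ρ (g₁ * g₂) + q • (1 : Module.End ℂ V) := by
    rw [hXY]
    rw [smul_sub, smul_add, smul_smul, mul_inv_cancel₀ hq0, one_smul]
    abel
  set γ : ℂ := cf (g₁ * g₂) with hγdef
  have hχ12 : ((χ₁ (g₁ * g₂) : ℂˣ) : ℂ) = q * q := by
    rw [map_mul, Units.val_mul, hg2u]
  set c : ℕ → ℂ := cseq q 1 γ 0 with hcdef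
  have hc0 : c 0 = 0 := rfl
  have hcs : ∀ i, c (i + 1) = q * (c i + 1 - 1 * q ^ (2 * i) * γ) := fun i => rfl
  have hYf : ∀ i, Y (f i) = c i • f (i - 1) := by
    intro i
    induction i with
    | zero => simp [hf0, hYw, hc0]
    | succ i ih =>
      have h1 : X (Y (f i)) = c i • f i := by
        cases i with
        | zero => rw [ih, hc0]; simp
        | succ j => rw [ih, Nat.add_sub_cancel, map_smul, hfX]
      have h2 : ρ (g₁ * g₂) (f i) = (γ * (q * q) ^ i) • f i := by
        rw [hρf, hχ12, hγdef]
      have hop := congrFun (congrArg DFunLike.coe hYX) (f i)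
      simp only [Module.End.mul_apply, LinearMap.smul_apply, LinearMap.sub_apply,
        LinearMap.add_apply, Module.End.one_apply] at hop
      rw [hfX] at hop
      rw [hop, h1, h2, Nat.add_sub_cancel, hcs]
      match_scalars
      ring
  -- nonvanishing
  have hfne : ∀ i, i < r → f i ≠ 0 := by
    intro i hi h0
    apply hw0
    have hww : (X ^ (r - i)) (f i) = w := by
      show (X ^ (r - i)) ((X ^ i) w) = w
      rw [← Module.End.mul_apply, ← pow_add, Nat.sub_add_cancel hi.le, hXr]
      rfl
    rw [h0, map_zero] at hww
    exact hww.symm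
  -- basis vectors indexed by ZMod r
  set b : ZMod r → V := fun i => f i.val with hbdef
  have hb0 : b 0 = w := by
    rw [hbdef]; simp [ZMod.val_zero, hf0]
  have hbne : ∀ i : ZMod r, b i ≠ 0 := fun i => hfne i.val (ZMod.val_lt i)
  have hbX : ∀ i : ZMod r, X (b i) = b (i + 1) := by
    intro i
    have hval : (i + 1).val = (i.val + 1) % r := by
      rw [ZMod.val_add, ZMod.val_one]
    show X (f i.val) = f ((i + 1).val)
    rw [hfX, hval]
    rcases Nat.lt_or_ge (i.val + 1) r with hlt | hge
    · rw [Nat.mod_eq_of_lt hlt]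
    · have hEq : i.val + 1 = r := le_antisymm (ZMod.val_lt i) hge
      rw [hEq, Nat.mod_self, hfr]
  have hbsub : ∀ i : ZMod r, i.val ≠ 0 → (i - 1).val = i.val - 1 := by
    intro i hi
    obtain ⟨k, hk⟩ : ∃ k, i.val = k + 1 := ⟨i.val - 1, by omega⟩
    have hklt : k < r := by have := ZMod.val_lt i; omega
    have hi' : i = ((k + 1 : ℕ) : ZMod r) := by
      rw [← hk]
      exact (ZMod.natCast_rightInverse i).symm
    have : i - 1 = ((k : ℕ) : ZMod r) := by
      rw [hi']; push_cast; ring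
    rw [this, ZMod.val_cast_of_lt hklt, hk]
    omega
  have hbY : ∀ i : ZMod r, Y (b i) = c i.val • b (i - 1) := by
    intro i
    show Y (f i.val) = c i.val • f (i - 1).val
    rw [hYf]
    by_cases h0 : i.val = 0
    · rw [h0, hc0, zero_smul, zero_smul]
    · rw [hbsub i h0]
  -- span is everything
  have hstab : Stable2 ρ X Y (Submodule.span ℂ (Set.range b)) := by
    refine ⟨?_, ?_, ?_⟩
    · intro v hv
      induction hv using Submodule.span_induction with
      | mem x hx =>
        obtain ⟨i, rfl⟩ := hx
        rw [hbX]
        exact Submodule.subset_span ⟨i + 1, rfl⟩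
      | zero => simp
      | add x y _ _ hx hy => rw [map_add]; exact Submodule.add_mem _ hx hy
      | smul a x _ hx => rw [map_smul]; exact Submodule.smul_mem _ _ hx
    · intro v hv
      induction hv using Submodule.span_induction with
      | mem x hx =>
        obtain ⟨i, rfl⟩ := hx
        rw [hbY]
        exact Submodule.smul_mem _ _ (Submodule.subset_span ⟨i - 1, rfl⟩)
      | zero => simp
      | add x y _ _ hx hy => rw [map_add]; exact Submodule.add_mem _ hx hy
      | smul a x _ hx => rw [map_smul]; exact Submodule.smul_mem _ _ hx
    · intro h v hv
      induction hv using Submodule.span_induction with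
      | mem x hx =>
        obtain ⟨i, rfl⟩ := hx
        rw [show (ρ h) (b i) = (cf h * ((χ₁ h : ℂˣ) : ℂ) ^ i.val) • b i from hρf h i.val]
        exact Submodule.smul_mem _ _ (Submodule.subset_span ⟨i, rfl⟩)
      | zero => simp
      | add x y _ _ hx hy => rw [map_add]; exact Submodule.add_mem _ hx hy
      | smul a x _ hx => rw [map_smul]; exact Submodule.smul_mem _ _ hx
  have htop : Submodule.span ℂ (Set.range b) = ⊤ := by
    refine (hirr.2 _ hstab).resolve_left ?_
    intro hbot
    apply hw0
    have : w ∈ Submodule.span ℂ (Set.range b) := by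
      rw [← hb0]; exact Submodule.subset_span ⟨0, rfl⟩
    rw [hbot] at this
    simpa using this
  -- linear independence via eigenvalues of ρ g₁
  have hli : LinearIndependent ℂ b := by
    refine Module.End.eigenvectors_linearIndependent' (ρ g₁)
      (fun i : ZMod r => cf g₁ * q ^ i.val) ?_ b ?_
    · intro i j hij
      have h1 : q ^ i.val = q ^ j.val := mul_left_cancel₀ (hcfne g₁) hij
      exact ZMod.val_injective r (hq.pow_inj (ZMod.val_lt i) (ZMod.val_lt j) h1)
    · intro i
      exact Module.End.hasEigenvector_iff.mpr
        ⟨Module.End.mem_eigenspace_iff.mpr (hρf g₁ i.val), hbne i⟩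
  set B : Module.Basis (ZMod r) ℂ V := Module.Basis.mk hli (le_of_eq htop.symm) with hBdef
  have hBb : ∀ i, B i = b i := fun i => Module.Basis.mk_apply hli _ i
  set φ : V ≃ₗ[ℂ] (ZMod r → ℂ) := B.equivFun with hφdef
  have hφB : ∀ i j : ZMod r, φ (B i) j = if i = j then 1 else 0 := fun i j =>
    B.equivFun_self i j
  refine ⟨φ, ?_, ?_, ?_⟩
  · -- X intertwines
    have hXeq : (φ : V →ₗ[ℂ] (ZMod r → ℂ)) ∘ₗ X = (wX r) ∘ₗ (φ : V →ₗ[ℂ] (ZMod r → ℂ)) := by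
      refine B.ext fun i => ?_
      simp only [LinearMap.comp_apply, LinearEquiv.coe_coe]
      have hL : X (B i) = B (i + 1) := by rw [hBb, hbX]; rw [hBb]
      rw [hL]
      funext j
      rw [hφB]
      show _ = φ (B i) (j - 1)
      rw [hφB]
      by_cases hij : i + 1 = j
      · rw [if_pos hij, if_pos (by rw [← hij]; ring)]
      · rw [if_neg hij, if_neg (by intro h; apply hij; rw [h]; ring)]
    intro v
    exact LinearMap.congr_fun hXeq v
  · -- Y intertwines
    have hYeq : (φ : V →ₗ[ℂ] (ZMod r → ℂ)) ∘ₗ Y =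
        (wY r (cseq q 1 ((η (g₁ * g₂) : ℂˣ) : ℂ) 0)) ∘ₗ (φ : V →ₗ[ℂ] (ZMod r → ℂ)) := by
      refine B.ext fun i => ?_
      simp only [LinearMap.comp_apply, LinearEquiv.coe_coe]
      have hL : Y (B i) = c i.val • B (i - 1) := by rw [hBb, hbY]; rw [hBb]
      rw [hL, map_smul]
      funext j
      simp only [Pi.smul_apply, smul_eq_mul]
      show c i.val * φ (B (i - 1)) j = cseq q 1 ((η (g₁ * g₂) : ℂˣ) : ℂ) 0 ((j + 1 : ZMod r).val) * φ (B i) (j + 1)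
      rw [hφB, hφB]
      by_cases hij : i = j + 1
      · rw [if_pos (by rw [hij]; ring : i - 1 = j), if_pos hij, ← hij]
        rfl
      · rw [if_neg (by intro h; apply hij; rw [← h]; ring : ¬ i - 1 = j), if_neg hij, mul_zero, mul_zero]
    intro v
    exact LinearMap.congr_fun hYeq v
  · -- ρ intertwines
    intro h
    have hρeq : (φ : V →ₗ[ℂ] (ZMod r → ℂ)) ∘ₗ (ρ h) =
        (wRho r χ₁ η h) ∘ₗ (φ : V →ₗ[ℂ] (ZMod r → ℂ)) := by
      refine B.ext fun i => ?_
      simp only [LinearMap.comp_apply, LinearEquiv.coe_coe]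
      have hL : ρ h (B i) = (cf h * ((χ₁ h : ℂˣ) : ℂ) ^ i.val) • B i := by
        rw [hBb]; exact hρf h i.val
      rw [hL, map_smul]
      funext j
      simp only [Pi.smul_apply, smul_eq_mul]
      show (cf h * ((χ₁ h : ℂˣ) : ℂ) ^ i.val) * φ (B i) j =
        ((η h : ℂˣ) : ℂ) * ((χ₁ h : ℂˣ) : ℂ) ^ j.val * φ (B i) j
      rw [hφB, hηval]
      by_cases hij : i = j
      · rw [hij]
      · rw [if_neg hij, mul_zero, mul_zero]
    intro v
    exact LinearMap.congr_fun (hρeq) v
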